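/- arXiv:2410.05897 — 4 statements merged into one kernel-verified Lean document; each statement's English description precedes it below -/
import Mathlib

section
/- Let φ_v(t) = (1/√(2πv)) e^{-t²/(2v)} denote the centered normal density with variance v, and φ⁺_v(t) = (t/v) e^{-t²/(2v)} 1_{t ≥ 0} the Rayleigh density with scale √v. Then for any v ∈ (0, 1/2] and any t ∈ ℝ: −|t| e^{-t²/2} 1_{t<0} ≤ (φ_v * φ⁺_{1−v})(t) − √(1−v)·φ⁺_1(t) ≤ √v · e^{-t²/(2v)} + |t| e^{-t²/2} 1_{t<0}, where * denotes convolution on ℝ. -/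
open Real MeasureTheory Filter Set

lemma gauss_integ (b μ : ℝ) (hb : 0 < b) :
    Integrable (fun s : ℝ => Real.exp (-(s - μ)^2 / (2*b))) := by
  have h : (fun s : ℝ => Real.exp (-(s - μ)^2 / (2*b)))
      = fun s : ℝ => Real.exp (-(1/(2*b)) * (s - μ)^2) := by
    funext s; ring_nf
  rw [h]
  exact (integrable_exp_neg_mul_sq (by positivity)).comp_sub_right μ

lemma mul_gauss_integ (b μ : ℝ) (hb : 0 < b) :
    Integrable (fun s : ℝ => (s - μ) * Real.exp (-(s - μ)^2 / (2*b))) := by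
  have h : (fun s : ℝ => (s - μ) * Real.exp (-(s - μ)^2 / (2*b)))
      = fun s : ℝ => (s - μ) * Real.exp (-(1/(2*b)) * (s - μ)^2) := by
    funext s; ring_nf
  rw [h]
  exact (integrable_mul_exp_neg_mul_sq (by positivity)).comp_sub_right μ

lemma gauss_sq_tendsto_top (b μ : ℝ) (hb : 0 < b) :
    Tendsto (fun s : ℝ => Real.exp (-(s - μ)^2 / (2*b))) atTop (nhds 0) := by
  apply Real.tendsto_exp_atBot.comp
  have h1 : Tendsto (fun s : ℝ => (s - μ)^2) atTop atTop :=
    (tendsto_pow_atTop (two_ne_zero)).comp (tendsto_atTop_add_const_right _ (-μ) tendsto_id)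
  have h2 : Tendsto (fun s : ℝ => (s - μ)^2 / (2*b)) atTop atTop :=
    h1.atTop_div_const (by positivity)
  have h3 : Tendsto (fun s : ℝ => -((s - μ)^2 / (2*b))) atTop atBot := tendsto_neg_atTop_atBot.comp h2
  exact h3.congr (fun s => by ring)

lemma gauss_sq_tendsto_bot (b μ : ℝ) (hb : 0 < b) :
    Tendsto (fun s : ℝ => Real.exp (-(s - μ)^2 / (2*b))) atBot (nhds 0) := by
  apply Real.tendsto_exp_atBot.comp
  have h1 : Tendsto (fun s : ℝ => (s - μ)^2) atBot atTop := by
    have : Tendsto (fun s : ℝ => (μ - s)^2) atBot atTop :=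
      (tendsto_pow_atTop (two_ne_zero)).comp
        (tendsto_atTop_add_const_left _ μ tendsto_neg_atBot_atTop)
    exact this.congr (fun s => by ring)
  have h2 : Tendsto (fun s : ℝ => (s - μ)^2 / (2*b)) atBot atTop :=
    h1.atTop_div_const (by positivity)
  have h3 : Tendsto (fun s : ℝ => -((s - μ)^2 / (2*b))) atBot atBot := tendsto_neg_atTop_atBot.comp h2
  exact h3.congr (fun s => by ring)

lemma hasDeriv_gauss (b μ s : ℝ) (hb : 0 < b) :
    HasDerivAt (fun x : ℝ => -b * Real.exp (-(x - μ)^2 / (2*b)))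
      ((s - μ) * Real.exp (-(s - μ)^2 / (2*b))) s := by
  have h1 : HasDerivAt (fun x : ℝ => -(x - μ)^2 / (2*b)) (-(s - μ) / b) s := by
    have := (((hasDerivAt_id s).sub_const μ).pow 2).neg.div_const (2*b)
    refine this.congr_deriv ?_
    simp only [id]
    field_simp
    ring
  have h2 := (h1.exp).const_mul (-b)
  refine h2.congr_deriv ?_
  field_simp

lemma int_Ioi_lin (b μ : ℝ) (hb : 0 < b) :
    ∫ s in Ioi (0:ℝ), (s - μ) * Real.exp (-(s - μ)^2 / (2*b))
      = b * Real.exp (-μ^2 / (2*b)) := by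
  rw [integral_Ioi_of_hasDerivAt_of_tendsto' (m := 0)
    (fun x _ => hasDeriv_gauss b μ x hb) ((mul_gauss_integ b μ hb).integrableOn)
    (by simpa using ((gauss_sq_tendsto_top b μ hb).const_mul (-b)).congr (fun s => rfl) |>.mono_right (by simp))]
  simp

lemma int_Iic_lin (b μ : ℝ) (hb : 0 < b) :
    ∫ s in Iic (0:ℝ), (μ - s) * Real.exp (-(s - μ)^2 / (2*b))
      = b * Real.exp (-μ^2 / (2*b)) := by
  have hderiv : ∀ x ∈ Iio (0:ℝ), HasDerivAt (fun x : ℝ => b * Real.exp (-(x - μ)^2 / (2*b)))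
      ((μ - x) * Real.exp (-(x - μ)^2 / (2*b))) x := by
    intro x _
    have := (hasDeriv_gauss b μ x hb).neg
    refine (this.congr_deriv (by ring)).congr_of_eventuallyEq (Eventually.of_forall fun y => ?_)
    simp
  have hint : IntegrableOn (fun s : ℝ => (μ - s) * Real.exp (-(s - μ)^2 / (2*b))) (Iic 0) := by
    have := (mul_gauss_integ b μ hb).neg
    refine (this.congr ?_).integrableOn
    filter_upwards with s
    simp; ring
  have htend : Tendsto (fun x : ℝ => b * Real.exp (-(x - μ)^2 / (2*b))) atBot (nhds 0) := by
    simpa using (gauss_sq_tendsto_bot b μ hb).const_mul b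
  have := integral_Iic_of_hasDerivAt_of_tendsto
    (Continuous.continuousWithinAt (by continuity)) hderiv hint htend
  rw [this]
  simp

lemma gauss_total (b μ : ℝ) (hb : 0 < b) :
    ∫ s : ℝ, Real.exp (-(s - μ)^2 / (2*b)) = Real.sqrt (2 * Real.pi * b) := by
  have h : (fun s : ℝ => Real.exp (-(s - μ)^2 / (2*b)))
      = fun s : ℝ => (fun x : ℝ => Real.exp (-(1/(2*b)) * x^2)) (s - μ) := by
    funext s; ring_nf
  rw [h, integral_sub_right_eq_self (fun x : ℝ => Real.exp (-(1/(2*b)) * x^2)) μ,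
    integral_gaussian]
  congr 1
  field_simp

lemma K_nonneg (b μ : ℝ) :
    0 ≤ ∫ s in Ioi (0:ℝ), Real.exp (-(s - μ)^2 / (2*b)) :=
  setIntegral_nonneg measurableSet_Ioi (fun s _ => (Real.exp_pos _).le)

lemma split_total (b μ : ℝ) (hb : 0 < b) :
    (∫ s in Iic (0:ℝ), Real.exp (-(s - μ)^2 / (2*b)))
      + ∫ s in Ioi (0:ℝ), Real.exp (-(s - μ)^2 / (2*b)) = Real.sqrt (2 * Real.pi * b) := by
  rw [intervalIntegral.integral_Iic_add_Ioi ((gauss_integ b μ hb).integrableOn) ((gauss_integ b μ hb).integrableOn)]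
  exact gauss_total b μ hb

lemma K_le (b μ : ℝ) (hb : 0 < b) :
    (∫ s in Ioi (0:ℝ), Real.exp (-(s - μ)^2 / (2*b))) ≤ Real.sqrt (2 * Real.pi * b) := by
  rw [← split_total b μ hb]
  have : 0 ≤ ∫ s in Iic (0:ℝ), Real.exp (-(s - μ)^2 / (2*b)) :=
    setIntegral_nonneg measurableSet_Iic (fun s _ => (Real.exp_pos _).le)
  linarith

lemma tail_le (b μ : ℝ) (hb : 0 < b) (hμ : 0 < μ) :
    Real.sqrt (2 * Real.pi * b) - (∫ s in Ioi (0:ℝ), Real.exp (-(s - μ)^2 / (2*b)))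
      ≤ (b / μ) * Real.exp (-μ^2 / (2*b)) := by
  have heq : Real.sqrt (2 * Real.pi * b) - (∫ s in Ioi (0:ℝ), Real.exp (-(s - μ)^2 / (2*b)))
      = ∫ s in Iic (0:ℝ), Real.exp (-(s - μ)^2 / (2*b)) := by
    rw [← split_total b μ hb]; ring
  rw [heq]
  have hmono : ∫ s in Iic (0:ℝ), Real.exp (-(s - μ)^2 / (2*b))
      ≤ ∫ s in Iic (0:ℝ), (1/μ) * ((μ - s) * Real.exp (-(s - μ)^2 / (2*b))) := by
    apply setIntegral_mono_on ((gauss_integ b μ hb).integrableOn)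
    · refine (((mul_gauss_integ b μ hb).neg.congr ?_).const_mul (1/μ)).integrableOn
      filter_upwards with s; simp; ring
    · exact measurableSet_Iic
    · intro s hs
      have h1 : (1:ℝ) ≤ (μ - s) / μ := by
        rw [le_div_iff₀ hμ]
        simp at hs; linarith
      calc Real.exp (-(s - μ)^2 / (2*b)) = 1 * Real.exp (-(s - μ)^2 / (2*b)) := by ring
        _ ≤ ((μ - s)/μ) * Real.exp (-(s - μ)^2 / (2*b)) :=
            mul_le_mul_of_nonneg_right h1 (Real.exp_pos _).le
        _ = (1/μ) * ((μ - s) * Real.exp (-(s - μ)^2 / (2*b))) := by ring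
  calc _ ≤ _ := hmono
    _ = (1/μ) * ∫ s in Iic (0:ℝ), (μ - s) * Real.exp (-(s - μ)^2 / (2*b)) := by
        rw [integral_const_mul]
    _ = (b / μ) * Real.exp (-μ^2 / (2*b)) := by rw [int_Iic_lin b μ hb]; ring



open Real MeasureTheory

/-- The centered normal density with variance `v`. -/
noncomputable def normalDens (v t : ℝ) : ℝ :=
  (1 / Real.sqrt (2 * Real.pi * v)) * Real.exp (-t ^ 2 / (2 * v))

/-- The Rayleigh density with scale `√v`. -/
noncomputable def rayleighDens (v t : ℝ) : ℝ :=
  if 0 ≤ t then (t / v) * Real.exp (-t ^ 2 / (2 * v)) else 0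


lemma conv_eval (v t : ℝ) (hv : 0 < v) (hv2 : v < 1) :
    (∫ s, normalDens v (t - s) * rayleighDens (1 - v) s)
    = Real.sqrt v / Real.sqrt (2*Real.pi) * Real.exp (-t^2/(2*v))
      + t * Real.exp (-t^2/2) / Real.sqrt (2*Real.pi*v)
        * ∫ s in Ioi (0:ℝ), Real.exp (-(s - t*(1-v))^2 / (2*(v*(1-v)))) := by
  have hw : (0:ℝ) < 1 - v := by linarith
  have hb : (0:ℝ) < v * (1 - v) := by positivity
  have hπ : (0:ℝ) < 2 * Real.pi := by positivity
  have hsv : (0:ℝ) < Real.sqrt (2*Real.pi*v) := Real.sqrt_pos.2 (by positivity)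
  set b := v * (1 - v) with hbdef
  set μ := t * (1 - v) with hμdef
  set c := Real.exp (-t^2/2) / ((1-v) * Real.sqrt (2*Real.pi*v)) with hcdef
  have key : (fun s => normalDens v (t - s) * rayleighDens (1 - v) s)
      = Set.indicator (Ioi (0:ℝ)) (fun s =>
          c * ((s-μ) * Real.exp (-(s-μ)^2/(2*b))) + (c*μ) * Real.exp (-(s-μ)^2/(2*b))) := by
    funext s
    by_cases hs : 0 < s
    · simp only [Set.indicator_apply, Set.mem_Ioi, if_pos hs]
      unfold normalDens rayleighDens
      rw [if_pos hs.le]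
      have hexp : Real.exp (-(t-s)^2/(2*v)) * Real.exp (-s^2/(2*(1-v)))
          = Real.exp (-t^2/2) * Real.exp (-(s-μ)^2/(2*b)) := by
        rw [← Real.exp_add, ← Real.exp_add]
        congr 1
        rw [hμdef, hbdef]
        field_simp
        ring
      have h1 : (1 - v) ≠ 0 := by positivity
      have h2 : Real.sqrt (2*Real.pi*v) ≠ 0 := by positivity
      have : (1 / Real.sqrt (2 * Real.pi * v) * Real.exp (-(t - s) ^ 2 / (2 * v))) *
          ((s / (1-v)) * Real.exp (-s ^ 2 / (2 * (1-v))))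
          = (s / ((1-v) * Real.sqrt (2*Real.pi*v)))
            * (Real.exp (-(t-s)^2/(2*v)) * Real.exp (-s^2/(2*(1-v)))) := by
        field_simp
      rw [this, hexp, hcdef]
      field_simp
      ring
    · simp only [Set.indicator_apply, Set.mem_Ioi, if_neg hs]
      rcases lt_or_eq_of_le (not_lt.1 hs) with h | h
      · unfold rayleighDens
        rw [if_neg (by linarith)]
        ring
      · rw [h]
        simp [rayleighDens]
  rw [key, integral_indicator measurableSet_Ioi]
  rw [integral_add
    (((mul_gauss_integ b μ hb).const_mul c).integrableOn)
    (((gauss_integ b μ hb).const_mul (c*μ)).integrableOn)]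
  rw [integral_const_mul, integral_const_mul, int_Ioi_lin b μ hb]
  congr 1
  · -- constant term identity
    rw [hcdef, hμdef, hbdef]
    have h1 : Real.exp (-t^2/2) * Real.exp (-(t*(1-v))^2/(2*(v*(1-v))))
        = Real.exp (-t^2/(2*v)) := by
      rw [← Real.exp_add]
      congr 1
      field_simp
      ring
    have h2 : Real.sqrt (2*Real.pi*v) = Real.sqrt (2*Real.pi) * Real.sqrt v :=
      Real.sqrt_mul (by positivity) v
    have h3 : Real.sqrt v * Real.sqrt v = v := Real.mul_self_sqrt hv.le
    have hsv' : Real.sqrt v ≠ 0 := by positivity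
    have hsp : Real.sqrt (2*Real.pi) ≠ 0 := by positivity
    calc Real.exp (-t^2/2) / ((1-v) * Real.sqrt (2*Real.pi*v)) * (v*(1-v) * Real.exp (-(t*(1-v))^2/(2*(v*(1-v)))))
        = (v / Real.sqrt (2*Real.pi*v)) * (Real.exp (-t^2/2) * Real.exp (-(t*(1-v))^2/(2*(v*(1-v))))) := by
          field_simp
      _ = Real.sqrt v / Real.sqrt (2*Real.pi) * Real.exp (-t^2/(2*v)) := by
          rw [h1, h2]
          congr 1
          field_simp
          linear_combination (-1 : ℝ) * h3
  · rw [hcdef, hμdef]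
    field_simp

lemma sqrt_div_iden (v : ℝ) (hv : 0 < v) :
    v / Real.sqrt (2*Real.pi*v) = Real.sqrt v / Real.sqrt (2*Real.pi) := by
  rw [Real.sqrt_mul (by positivity : (0:ℝ) ≤ 2*Real.pi) v,
    div_eq_div_iff (by positivity) (by positivity)]
  linear_combination (-(Real.sqrt (2*Real.pi))) * Real.mul_self_sqrt hv.le

/-- For `v ∈ (0, 1/2]`, the convolution `φ_v * φ⁺_{1-v}` is close to `√(1-v) φ⁺`. -/
theorem stmt_1 (v : ℝ) (hv : v ∈ Set.Ioc (0 : ℝ) (1 / 2)) (t : ℝ) :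
    -(|t| * Real.exp (-t ^ 2 / 2) * (if t < 0 then (1 : ℝ) else 0)) ≤
        (∫ s, normalDens v (t - s) * rayleighDens (1 - v) s) -
          Real.sqrt (1 - v) * rayleighDens 1 t ∧
      (∫ s, normalDens v (t - s) * rayleighDens (1 - v) s) -
          Real.sqrt (1 - v) * rayleighDens 1 t ≤
        Real.sqrt v * Real.exp (-t ^ 2 / (2 * v)) +
          |t| * Real.exp (-t ^ 2 / 2) * (if t < 0 then (1 : ℝ) else 0) := by
  obtain ⟨hv0, hvh⟩ := hv
  have hv1 : v < 1 := by linarith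
  have hw : (0:ℝ) < 1 - v := by linarith
  have hb : (0:ℝ) < v * (1 - v) := by positivity
  rw [conv_eval v t hv0 hv1]
  set K := ∫ s in Set.Ioi (0:ℝ), Real.exp (-(s - t*(1-v))^2 / (2*(v*(1-v)))) with hKdef
  set S := Real.sqrt (2*Real.pi*v) with hSdef
  set W := Real.sqrt (1-v) with hWdef
  set E1 := Real.exp (-t^2/(2*v)) with hE1def
  set E2 := Real.exp (-t^2/2) with hE2def
  have hS : 0 < S := Real.sqrt_pos.2 (by positivity)
  have hW0 : 0 ≤ W := Real.sqrt_nonneg _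
  have hW1 : W ≤ 1 := by
    calc W = Real.sqrt (1 - v) := hWdef
      _ ≤ Real.sqrt 1 := Real.sqrt_le_sqrt (by linarith)
      _ = 1 := Real.sqrt_one
  have hE1 : 0 < E1 := Real.exp_pos _
  have hE2 : 0 < E2 := Real.exp_pos _
  have hK0 : 0 ≤ K := K_nonneg _ _
  have hKS : K ≤ S * W := by
    have h := K_le (v*(1-v)) (t*(1-v)) hb
    have heq : Real.sqrt (2 * Real.pi * (v*(1-v))) = S * W := by
      rw [hSdef, hWdef, ← Real.sqrt_mul (by positivity)]
      congr 1; ring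
    rw [heq] at h
    exact h
  have hA0 : 0 ≤ Real.sqrt v / Real.sqrt (2*Real.pi) * E1 := by positivity
  have hA1 : Real.sqrt v / Real.sqrt (2*Real.pi) * E1 ≤ Real.sqrt v * E1 := by
    have h1 : (1:ℝ) ≤ Real.sqrt (2*Real.pi) := by
      rw [show (1:ℝ) = Real.sqrt 1 by simp]
      exact Real.sqrt_le_sqrt (by nlinarith [Real.pi_gt_three])
    have := div_le_self (Real.sqrt_nonneg v) h1
    exact mul_le_mul_of_nonneg_right this hE1.le
  rcases lt_or_ge t 0 with ht | ht
  · -- t < 0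
    rw [if_pos ht, abs_of_neg ht]
    have hray : rayleighDens 1 t = 0 := by
      unfold rayleighDens; rw [if_neg (by linarith)]
    rw [hray]
    have htE2 : t * E2 ≤ 0 := mul_nonpos_of_nonpos_of_nonneg ht.le hE2.le
    have hq : t * E2 / S ≤ 0 := div_nonpos_iff.2 (Or.inr ⟨htE2, hS.le⟩)
    have h2 : (t * E2 / S) * (S * W) ≤ (t * E2 / S) * K := mul_le_mul_of_nonpos_left hKS hq
    have h3 : (t * E2 / S) * (S * W) = t * E2 * W := by field_simp
    have h4 : t * E2 ≤ t * E2 * W := by nlinarith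
    have h5 : (t * E2 / S) * K ≤ 0 := mul_nonpos_of_nonpos_of_nonneg hq hK0
    constructor
    · have : t * E2 ≤ t * E2 / S * K := by
        rw [h3] at h2; linarith
      linarith
    · linarith
  · -- 0 ≤ t
    rw [if_neg (not_lt.2 ht)]
    have hray : rayleighDens 1 t = t * E2 := by
      unfold rayleighDens; rw [if_pos ht]; norm_num [hE2def]
    rw [hray]
    have hq : 0 ≤ t * E2 / S := by positivity
    have hup : t * E2 / S * K ≤ W * (t * E2) := by
      have h2 : (t * E2 / S) * K ≤ (t * E2 / S) * (S * W) := mul_le_mul_of_nonneg_left hKS hq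
      have h3 : (t * E2 / S) * (S * W) = W * (t * E2) := by field_simp
      linarith
    constructor
    · -- lower bound: 0 ≤ D
      rcases eq_or_lt_of_le ht with rfl | ht0
      · simp only [zero_mul, mul_zero, zero_div]
        norm_num
        positivity
      · have hμ : 0 < t * (1 - v) := by positivity
        have htail := tail_le (v*(1-v)) (t*(1-v)) hb hμ
        have heq : Real.sqrt (2 * Real.pi * (v*(1-v))) = S * W := by
          rw [hSdef, hWdef, ← Real.sqrt_mul (by positivity)]
          congr 1; ring
        rw [heq] at htail
        have hstep : W * (t * E2) - t * E2 / S * K ≤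
            (t * E2 / S) * ((v*(1-v) / (t*(1-v))) * Real.exp (-(t*(1-v))^2 / (2*(v*(1-v))))) := by
          have h1 : W * (t * E2) - t * E2 / S * K = (t * E2 / S) * (S * W - K) := by
            field_simp
          rw [h1]
          exact mul_le_mul_of_nonneg_left htail hq
        have hkey : (t * E2 / S) * ((v*(1-v) / (t*(1-v))) * Real.exp (-(t*(1-v))^2 / (2*(v*(1-v)))))
            = Real.sqrt v / Real.sqrt (2*Real.pi) * E1 := by
          have hE : E2 * Real.exp (-(t*(1-v))^2/(2*(v*(1-v)))) = E1 := by
            rw [hE2def, hE1def, ← Real.exp_add]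
            congr 1
            field_simp
            ring
          have h2 : (t * E2 / S) * ((v*(1-v) / (t*(1-v))) * Real.exp (-(t*(1-v))^2 / (2*(v*(1-v)))))
              = (v / S) * (E2 * Real.exp (-(t*(1-v))^2/(2*(v*(1-v))))) := by
            field_simp
          rw [h2, hE, hSdef, sqrt_div_iden v hv0]
        linarith [hstep.trans_eq hkey]
    · linarith
end

section
/- Let α > 0 and let a_1, …, a_n be nonnegative real numbers. Then exp(α √((1/n) ∑_{i=1}^n a_i²)) ≤ (1/n) ∑_{i=1}^n max{e, exp(α a_i)}. -/
open Real Finset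

private lemma aux_conv_g {α : ℝ} (hα : 0 < α) :
    ConvexOn ℝ (Set.Ici ((1/α)^2)) (fun u => Real.exp (α * Real.sqrt u)) := by
  set c : ℝ := (1/α)^2 with hc
  have hcpos : 0 < c := by positivity
  have hderiv : ∀ u : ℝ, u ∈ Set.Ioi c →
      HasDerivAt (fun u => Real.exp (α * Real.sqrt u))
        (Real.exp (α * Real.sqrt u) * (α * (1 / (2 * Real.sqrt u)))) u := by
    intro u hu
    have hu0 : u ≠ 0 := (hcpos.trans hu).ne'
    exact ((Real.hasDerivAt_sqrt hu0).const_mul α).exp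
  apply MonotoneOn.convexOn_of_deriv (convex_Ici c)
  · exact (Real.continuous_exp.comp (continuous_const.mul Real.continuous_sqrt)).continuousOn
  · rw [interior_Ici]
    exact fun u hu => ((hderiv u hu).differentiableAt).differentiableWithinAt
  · rw [interior_Ici]
    intro u hu v hv huv
    rw [(hderiv u hu).deriv, (hderiv v hv).deriv]
    have hupos : 0 < u := hcpos.trans hu
    have hvpos : 0 < v := hcpos.trans hv
    set su := Real.sqrt u with hsu
    set sv := Real.sqrt v with hsv
    have hsupos : 0 < su := Real.sqrt_pos.mpr hupos
    have hsvpos : 0 < sv := Real.sqrt_pos.mpr hvpos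
    have hsuv : su ≤ sv := Real.sqrt_le_sqrt huv
    have hsuα : 1/α ≤ su := by
      have : Real.sqrt c ≤ su := Real.sqrt_le_sqrt (le_of_lt hu)
      rwa [hc, Real.sqrt_sq (by positivity)] at this
    -- key : exp(α su) * sv ≤ exp(α sv) * su
    have hkey : Real.exp (α * su) * sv ≤ Real.exp (α * sv) * su := by
      have hsplit : Real.exp (α * sv) = Real.exp (α * su) * Real.exp (α * (sv - su)) := by
        rw [← Real.exp_add]; ring_nf
      have h1 : 1 + α * (sv - su) ≤ Real.exp (α * (sv - su)) := by
        have := Real.add_one_le_exp (α * (sv - su)); linarith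
      have hαsu : 1 ≤ α * su := by
        rw [div_le_iff₀ hα] at hsuα; linarith [mul_comm α su]
      have hepos : 0 < Real.exp (α * su) := Real.exp_pos _
      rw [hsplit]
      have h2 : su + su * (α * (sv - su)) ≥ sv := by nlinarith
      nlinarith [mul_le_mul_of_nonneg_left h1 hepos.le]
    rw [mul_comm (Real.exp (α * su)), mul_comm (Real.exp (α * sv))]
    rw [mul_assoc, mul_assoc]
    apply mul_le_mul_of_nonneg_left _ hα.le
    rw [one_div, one_div, ← div_eq_inv_mul, ← div_eq_inv_mul,
      div_le_div_iff₀ (by positivity) (by positivity)]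
    nlinarith [hkey]

private lemma aux_conv_phi {α : ℝ} (hα : 0 < α) :
    ConvexOn ℝ (Set.Ici (0:ℝ))
      (fun u => Real.exp (α * Real.sqrt (max u ((1/α)^2)))) := by
  set c : ℝ := (1/α)^2 with hc
  have hcpos : 0 < c := by positivity
  have himg : (fun u : ℝ => max u c) '' Set.Ici 0 = Set.Ici c := by
    ext v
    constructor
    · rintro ⟨u, hu, rfl⟩; exact Set.mem_Ici.mpr (le_max_right _ _)
    · intro hv
      exact ⟨v, Set.mem_Ici.mpr (hcpos.le.trans hv), max_eq_left hv⟩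
  have hmaxconv : ConvexOn ℝ (Set.Ici (0:ℝ)) (fun u : ℝ => max u c) := by
    exact (convexOn_id (convex_Ici (0:ℝ))).sup (convexOn_const (𝕜 := ℝ) c (convex_Ici (0:ℝ)))
  have hmono : MonotoneOn (fun u => Real.exp (α * Real.sqrt u))
      ((fun u : ℝ => max u c) '' Set.Ici 0) := by
    intro x _ y _ hxy
    exact Real.exp_le_exp.mpr (mul_le_mul_of_nonneg_left (Real.sqrt_le_sqrt hxy) hα.le)
  have hg : ConvexOn ℝ ((fun u : ℝ => max u c) '' Set.Ici 0)
      (fun u => Real.exp (α * Real.sqrt u)) := by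
    rw [himg]; exact aux_conv_g hα
  exact hg.comp hmaxconv hmono

/-- `exp(α √((1/n) ∑ aᵢ²)) ≤ (1/n) ∑ max{e, exp(α aᵢ)}` for nonnegative `aᵢ`. -/
theorem stmt_10 (n : ℕ) (hn : 0 < n) (α : ℝ) (hα : 0 < α) (a : Fin n → ℝ)
    (ha : ∀ i, 0 ≤ a i) :
    Real.exp (α * Real.sqrt ((1 / (n : ℝ)) * ∑ i, a i ^ 2)) ≤
      (1 / (n : ℝ)) * ∑ i, max (Real.exp 1) (Real.exp (α * a i)) := by
  have hn' : (0:ℝ) < n := Nat.cast_pos.mpr hn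
  set c : ℝ := (1/α)^2 with hc
  have hcpos : 0 < c := by positivity
  have hphi := aux_conv_phi hα
  have hjensen := hphi.map_sum_le (t := Finset.univ) (w := fun _ : Fin n => 1 / (n:ℝ))
    (p := fun i => (a i)^2)
    (fun i _ => by positivity)
    (by simp [Finset.sum_const, Finset.card_univ]; field_simp)
    (fun i _ => Set.mem_Ici.mpr (by positivity))
  simp only [smul_eq_mul] at hjensen
  rw [← Finset.mul_sum, ← Finset.mul_sum] at hjensen
  set m : ℝ := (1 / (n:ℝ)) * ∑ i, a i ^ 2 with hm
  have h1 : Real.exp (α * Real.sqrt m) ≤ Real.exp (α * Real.sqrt (max m c)) :=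
    Real.exp_le_exp.mpr (mul_le_mul_of_nonneg_left
      (Real.sqrt_le_sqrt (le_max_left _ _)) hα.le)
  have h2 : ∀ i, Real.exp (α * Real.sqrt (max ((a i)^2) c)) =
      max (Real.exp 1) (Real.exp (α * a i)) := by
    intro i
    have sqrtMono : Monotone Real.sqrt := fun x y h => Real.sqrt_le_sqrt h
    have hs : Real.sqrt (max ((a i)^2) c) = max (a i) (1/α) := by
      rw [Monotone.map_max sqrtMono, Real.sqrt_sq (ha i), hc,
        Real.sqrt_sq (by positivity : (0:ℝ) ≤ 1/α)]
    rw [hs]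
    have : α * max (a i) (1/α) = max (α * a i) 1 := by
      rw [mul_max_of_nonneg _ _ hα.le]
      congr 1
      field_simp
    rw [this, Monotone.map_max Real.exp_monotone, max_comm]
  calc Real.exp (α * Real.sqrt m) ≤ Real.exp (α * Real.sqrt (max m c)) := h1
    _ ≤ (1 / (n:ℝ)) * ∑ i, Real.exp (α * Real.sqrt (max ((a i)^2) c)) := hjensen
    _ = (1 / (n:ℝ)) * ∑ i, max (Real.exp 1) (Real.exp (α * a i)) := by
        congr 1; exact Finset.sum_congr rfl (fun i _ => h2 i)
end

section
/- Let κ : ℝ → ℝ be a nonnegative continuously differentiable function supported in [−a, a], and let G : ℝ → ℝ be bounded measurable with |G| ≤ H for a nonnegative function H. Then for all t, t' ∈ ℝ and b ≥ 0 with |t − t'| ≤ b, |(G * κ)(t) − (G * κ)(t')| ≤ ‖κ'‖_∞ · |t − t'| · (H * 1_{[−a−b, a+b]})(t), where ‖κ'‖_∞ = sup |κ'| and * denotes convolution. -/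
open Real MeasureTheory Set

/-- Lipschitz estimate for convolutions with a smooth compactly supported kernel:
if `κ` is `C¹`, nonnegative, supported in `[-a,a]`, `|G| ≤ H` and `|t - t'| ≤ b`, then
`|(G*κ)(t) - (G*κ)(t')| ≤ ‖κ'‖_∞ |t - t'| (H * 1_{[-a-b,a+b]})(t)`. -/
theorem stmt_17 (a b K : ℝ) (ha : 0 < a) (hb : 0 ≤ b)
    (κ κ' G H : ℝ → ℝ)
    (hκpos : ∀ s, 0 ≤ κ s)
    (hκsupp : ∀ s, s ∉ Set.Icc (-a) a → κ s = 0)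
    (hκderiv : ∀ s, HasDerivAt κ (κ' s) s)
    (hκ'cont : Continuous κ')
    (hK : ∀ s, |κ' s| ≤ K)
    (hG : Measurable G) (hH : Measurable H)
    (hHpos : ∀ s, 0 ≤ H s) (hGH : ∀ s, |G s| ≤ H s)
    (t t' : ℝ) (htt' : |t - t'| ≤ b)
    (hint1 : Integrable (fun s => G (t - s) * κ s))
    (hint2 : Integrable (fun s => G (t' - s) * κ s))
    (hint3 : Integrable (fun s =>
      H (t - s) * Set.indicator (Set.Icc (-a - b) (a + b)) (fun _ => (1 : ℝ)) s)) :
    |(∫ s, G (t - s) * κ s) - ∫ s, G (t' - s) * κ s| ≤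
      K * |t - t'| *
        ∫ s, H (t - s) * Set.indicator (Set.Icc (-a - b) (a + b)) (fun _ => (1 : ℝ)) s := by
  set ind : ℝ → ℝ := Set.indicator (Set.Icc (-a - b) (a + b)) (fun _ => (1 : ℝ)) with hind
  have hK0 : 0 ≤ K := le_trans (abs_nonneg _) (hK 0)
  have hlip : ∀ x y : ℝ, |κ x - κ y| ≤ K * |x - y| := by
    intro x y
    have := Convex.norm_image_sub_le_of_norm_hasDerivWithin_le
      (f := κ) (f' := κ') (C := K) (s := Set.univ)
      (fun z _ => (hκderiv z).hasDerivWithinAt)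
      (fun z _ => by simpa using hK z) convex_univ (Set.mem_univ y) (Set.mem_univ x)
    simpa [Real.norm_eq_abs] using this
  -- change of variables u = t - s (resp. t' - s)
  have e1 : (∫ s, G (t - s) * κ s) = ∫ u, G u * κ (t - u) := by
    rw [← integral_sub_left_eq_self (fun u => G u * κ (t - u)) volume t]
    simp
  have e2 : (∫ s, G (t' - s) * κ s) = ∫ u, G u * κ (t' - u) := by
    rw [← integral_sub_left_eq_self (fun u => G u * κ (t' - u)) volume t']
    simp
  have e3 : (∫ s, H (t - s) * ind s) = ∫ u, H u * ind (t - u) := by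
    rw [← integral_sub_left_eq_self (fun u => H u * ind (t - u)) volume t]
    simp
  have h1' : Integrable (fun u => G u * κ (t - u)) := by
    simpa using hint1.comp_sub_left t
  have h2' : Integrable (fun u => G u * κ (t' - u)) := by
    simpa using hint2.comp_sub_left t'
  have h3' : Integrable (fun u => H u * ind (t - u)) := by
    simpa using hint3.comp_sub_left t
  rw [e1, e2, e3, ← integral_sub h1' h2']
  have hbound : ∀ u : ℝ, |G u * κ (t - u) - G u * κ (t' - u)| ≤
      K * |t - t'| * (H u * ind (t - u)) := by
    intro u
    rw [← mul_sub, abs_mul]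
    by_cases hmem : t - u ∈ Set.Icc (-a - b) (a + b)
    · have hi : ind (t - u) = 1 := Set.indicator_of_mem hmem _
      rw [hi, mul_one]
      have hκb : |κ (t - u) - κ (t' - u)| ≤ K * |t - t'| := by
        simpa [sub_sub_sub_cancel_right] using hlip (t - u) (t' - u)
      calc |G u| * |κ (t - u) - κ (t' - u)| ≤ H u * (K * |t - t'|) :=
            mul_le_mul (hGH u) hκb (abs_nonneg _) (hHpos u)
        _ = K * |t - t'| * H u := by ring
    · have h1 : κ (t - u) = 0 := by
        apply hκsupp
        intro hc
        exact hmem ⟨by linarith [hc.1, hb], by linarith [hc.2, hb]⟩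
      have h2 : κ (t' - u) = 0 := by
        apply hκsupp
        intro hc
        have hab := abs_le.mp htt'
        exact hmem ⟨by linarith [hc.1, hab.1, hab.2], by linarith [hc.2, hab.1, hab.2]⟩
      rw [h1, h2, sub_zero, abs_zero, mul_zero]
      exact mul_nonneg (mul_nonneg hK0 (abs_nonneg _))
        (mul_nonneg (hHpos u) (Set.indicator_nonneg (fun _ _ => zero_le_one) _))
  calc |∫ u, (G u * κ (t - u) - G u * κ (t' - u))|
      ≤ ∫ u, |G u * κ (t - u) - G u * κ (t' - u)| := by
        simpa [Real.norm_eq_abs] using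
          norm_integral_le_integral_norm (fun u => G u * κ (t - u) - G u * κ (t' - u))
    _ ≤ ∫ u, K * |t - t'| * (H u * ind (t - u)) :=
        integral_mono (h1'.sub h2').abs ((h3'.const_mul _)) hbound
    _ = K * |t - t'| * ∫ u, H u * ind (t - u) := integral_const_mul _ _
end

section
/- Let F : X × ℝ → ℝ₊ be a nonnegative continuous function with compact support, where X is a compact metric space. Then for every k ≥ 1 there exist compactly supported functions G_k, H_k : X × ℝ → ℝ₊ that are Lipschitz in the second variable and γ-Hölder in the first variable, such that H_k(x, t) ≤ F(x, t + v) ≤ G_k(x, t + w) for all x ∈ X, t ∈ ℝ and all |v|, |w| ≤ 1/k, the sequence (G_k) is decreasing, (H_k) is increasing, and both G_k and H_k converge uniformly to F as k → ∞. -/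
open Real Filter

section aux

set_option linter.unusedSectionVars false

variable {X : Type*} [MetricSpace X]

private lemma rpow_add_le' {γ : ℝ} (hγ0 : 0 ≤ γ) (hγ1 : γ ≤ 1) {a b : ℝ}
    (ha : 0 ≤ a) (hb : 0 ≤ b) : (a + b) ^ γ ≤ a ^ γ + b ^ γ := by
  lift a to NNReal using ha
  lift b to NNReal using hb
  have := NNReal.rpow_add_le_add_rpow a b hγ0 hγ1
  exact_mod_cast this

/-- penalty function -/
noncomputable def pen (γ : ℝ) (k : ℕ) (p q : X × ℝ) : ℝ :=
  dist p.1 q.1 ^ γ + max (|p.2 - q.2| - 1 / (k : ℝ)) 0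

lemma pen_nonneg (γ : ℝ) (k : ℕ) (p q : X × ℝ) : 0 ≤ pen γ k p q :=
  add_nonneg (Real.rpow_nonneg dist_nonneg _) (le_max_right _ _)

lemma pen_self {γ : ℝ} (hγ : 0 < γ) (k : ℕ) (p : X × ℝ) : pen γ k p p = 0 := by
  have h1 : (0:ℝ) ≤ 1 / (k:ℝ) := by positivity
  simp [pen, Real.zero_rpow (ne_of_gt hγ), max_eq_right, neg_nonpos, h1]

lemma pen_lip {γ : ℝ} (hγ0 : 0 < γ) (hγ1 : γ ≤ 1) (k : ℕ) (p q r : X × ℝ) :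
    pen γ k q r ≤ pen γ k p r + (dist p.1 q.1 ^ γ + |p.2 - q.2|) := by
  have h1 : dist q.1 r.1 ^ γ ≤ dist p.1 r.1 ^ γ + dist p.1 q.1 ^ γ := by
    calc dist q.1 r.1 ^ γ ≤ (dist p.1 r.1 + dist p.1 q.1) ^ γ := by
          apply Real.rpow_le_rpow dist_nonneg _ hγ0.le
          calc dist q.1 r.1 ≤ dist q.1 p.1 + dist p.1 r.1 := dist_triangle _ _ _
            _ = dist p.1 r.1 + dist p.1 q.1 := by rw [dist_comm q.1 p.1]; ring
      _ ≤ dist p.1 r.1 ^ γ + dist p.1 q.1 ^ γ :=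
          rpow_add_le' hγ0.le hγ1 dist_nonneg dist_nonneg
  have h2 : max (|q.2 - r.2| - 1 / (k:ℝ)) 0 ≤
      max (|p.2 - r.2| - 1 / (k:ℝ)) 0 + |p.2 - q.2| := by
    apply max_le
    · have : |q.2 - r.2| ≤ |p.2 - r.2| + |p.2 - q.2| := by
        calc |q.2 - r.2| = |(p.2 - r.2) - (p.2 - q.2)| := by ring_nf
          _ ≤ |p.2 - r.2| + |p.2 - q.2| := abs_sub _ _
      have := le_max_left (|p.2 - r.2| - 1 / (k:ℝ)) 0
      linarith
    · have := le_max_right (|p.2 - r.2| - 1 / (k:ℝ)) 0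
      have := abs_nonneg (p.2 - q.2)
      linarith
  simp only [pen]
  linarith

lemma pen_mono {γ : ℝ} {k m : ℕ} (hk : 1 ≤ k) (hkm : k ≤ m) (p q : X × ℝ) :
    (k:ℝ) * pen γ k p q ≤ (m:ℝ) * pen γ m p q := by
  have hpen : pen γ k p q ≤ pen γ m p q := by
    have h1 : 1 / (m:ℝ) ≤ 1 / (k:ℝ) := by
      apply one_div_le_one_div_of_le
      · exact_mod_cast hk
      · exact_mod_cast hkm
    simp only [pen]
    have : max (|p.2 - q.2| - 1 / (k:ℝ)) 0 ≤ max (|p.2 - q.2| - 1 / (m:ℝ)) 0 :=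
      max_le_max (by linarith) le_rfl
    linarith
  calc (k:ℝ) * pen γ k p q ≤ (k:ℝ) * pen γ m p q := by
        apply mul_le_mul_of_nonneg_left hpen (by positivity)
    _ ≤ (m:ℝ) * pen γ m p q := by
        apply mul_le_mul_of_nonneg_right _ (pen_nonneg _ _ _ _)
        exact_mod_cast hkm


variable (γ : ℝ) (F : X × ℝ → ℝ)

noncomputable def GG (k : ℕ) (p : X × ℝ) : ℝ :=
  ⨆ q : X × ℝ, (F q - (k:ℝ) * pen γ k p q)

noncomputable def HH (k : ℕ) (p : X × ℝ) : ℝ :=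
  ⨅ q : X × ℝ, (F q + (k:ℝ) * pen γ k p q)

variable {F}

lemma bddA {M : ℝ} (hM : ∀ q, F q ≤ M) (k : ℕ) (p : X × ℝ) :
    BddAbove (Set.range fun q : X × ℝ => F q - (k:ℝ) * pen γ k p q) := by
  refine ⟨M, ?_⟩
  rintro _ ⟨q, rfl⟩
  have h1 := mul_nonneg (Nat.cast_nonneg (α := ℝ) k) (pen_nonneg γ k p q)
  have h2 := hM q
  dsimp
  linarith

lemma bddB (hpos : ∀ q, 0 ≤ F q) (k : ℕ) (p : X × ℝ) :
    BddBelow (Set.range fun q : X × ℝ => F q + (k:ℝ) * pen γ k p q) := by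
  refine ⟨0, ?_⟩
  rintro _ ⟨q, rfl⟩
  have h1 := mul_nonneg (Nat.cast_nonneg (α := ℝ) k) (pen_nonneg γ k p q)
  have h2 := hpos q
  dsimp
  linarith

lemma le_GG {M : ℝ} (hM : ∀ q, F q ≤ M) (k : ℕ) (p q : X × ℝ) :
    F q - (k:ℝ) * pen γ k p q ≤ GG γ F k p :=
  le_ciSup (bddA γ hM k p) q

lemma GG_le (k : ℕ) (p : X × ℝ) {c : ℝ}
    (h : ∀ q, F q - (k:ℝ) * pen γ k p q ≤ c) : GG γ F k p ≤ c := by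
  haveI : Nonempty (X × ℝ) := ⟨p⟩
  exact ciSup_le h

lemma HH_le (hpos : ∀ q, 0 ≤ F q) (k : ℕ) (p q : X × ℝ) :
    HH γ F k p ≤ F q + (k:ℝ) * pen γ k p q :=
  ciInf_le (bddB γ hpos k p) q

lemma le_HH (k : ℕ) (p : X × ℝ) {c : ℝ}
    (h : ∀ q, c ≤ F q + (k:ℝ) * pen γ k p q) : c ≤ HH γ F k p := by
  haveI : Nonempty (X × ℝ) := ⟨p⟩
  exact le_ciInf h

lemma F_le_GG {M : ℝ} (hγ : 0 < γ) (hM : ∀ q, F q ≤ M) (k : ℕ) (p : X × ℝ) :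
    F p ≤ GG γ F k p := by
  have := le_GG γ hM k p p
  rwa [pen_self hγ, mul_zero, sub_zero] at this

lemma HH_le_F (hγ : 0 < γ) (hpos : ∀ q, 0 ≤ F q) (k : ℕ) (p : X × ℝ) :
    HH γ F k p ≤ F p := by
  have := HH_le γ hpos k p p
  rwa [pen_self hγ, mul_zero, add_zero] at this

/-- one-sided Lipschitz estimate for GG -/
lemma GG_lip_half {M : ℝ} (hγ0 : 0 < γ) (hγ1 : γ ≤ 1) (hM : ∀ q, F q ≤ M)
    (k : ℕ) (p q : X × ℝ) :
    GG γ F k p ≤ GG γ F k q + (k:ℝ) * (dist p.1 q.1 ^ γ + |p.2 - q.2|) := by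
  apply GG_le
  intro r
  have h1 := pen_lip hγ0 hγ1 k q p r
  -- pen γ k p r ≤ pen γ k q r + (dist q.1 p.1 ^ γ + |q.2 - p.2|)
  rw [dist_comm q.1 p.1, abs_sub_comm q.2 p.2] at h1
  have h2 := le_GG γ hM k q r
  have h3 : (k:ℝ) * pen γ k q r ≤ (k:ℝ) * (pen γ k p r + (dist p.1 q.1 ^ γ + |p.2 - q.2|)) := by
    apply mul_le_mul_of_nonneg_left _ (Nat.cast_nonneg k)
    -- need pen q r ≤ pen p r + ...
    exact pen_lip hγ0 hγ1 k p q r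
  nlinarith [pen_lip hγ0 hγ1 k p q r, Nat.cast_nonneg (α := ℝ) k]

lemma HH_lip_half (hγ0 : 0 < γ) (hγ1 : γ ≤ 1) (hpos : ∀ q, 0 ≤ F q)
    (k : ℕ) (p q : X × ℝ) :
    HH γ F k q ≤ HH γ F k p + (k:ℝ) * (dist p.1 q.1 ^ γ + |p.2 - q.2|) := by
  rw [← sub_le_iff_le_add]
  apply le_HH
  intro r
  have h1 : pen γ k q r ≤ pen γ k p r + (dist p.1 q.1 ^ γ + |p.2 - q.2|) :=
    pen_lip hγ0 hγ1 k p q r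
  have h2 := HH_le γ hpos k q r
  nlinarith [Nat.cast_nonneg (α := ℝ) k]

end aux


/-- Approximation of a nonnegative continuous compactly supported function `F` on `X × ℝ`
by monotone sequences of `γ`-regular compactly supported functions `G_k, H_k` with
`H_k ≤_{1/k} F ≤_{1/k} G_k`, converging uniformly to `F`. -/
theorem stmt_19 {X : Type*} [MetricSpace X] [CompactSpace X] (γ : ℝ)
    (hγ : γ ∈ Set.Ioo (0 : ℝ) 1) (F : X × ℝ → ℝ) (hF : Continuous F)
    (hFpos : ∀ p, 0 ≤ F p) (hFsupp : HasCompactSupport F) :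
    ∃ G H : ℕ → X × ℝ → ℝ,
      (∀ k, 1 ≤ k →
        (∀ p, 0 ≤ G k p) ∧ (∀ p, 0 ≤ H k p) ∧
        HasCompactSupport (G k) ∧ HasCompactSupport (H k) ∧
        (∃ L : ℝ, ∀ p q : X × ℝ,
          |G k p - G k q| ≤ L * (dist p.1 q.1 ^ γ + |p.2 - q.2|)) ∧
        (∃ L : ℝ, ∀ p q : X × ℝ,
          |H k p - H k q| ≤ L * (dist p.1 q.1 ^ γ + |p.2 - q.2|)) ∧
        (∀ (x : X) (t v : ℝ), |v| ≤ 1 / (k : ℝ) → H k (x, t) ≤ F (x, t + v)) ∧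
        (∀ (x : X) (t w : ℝ), |w| ≤ 1 / (k : ℝ) → F (x, t) ≤ G k (x, t + w))) ∧
      (∀ k, 1 ≤ k → ∀ p, G (k + 1) p ≤ G k p) ∧
      (∀ k, 1 ≤ k → ∀ p, H k p ≤ H (k + 1) p) ∧
      TendstoUniformly (fun k => G k) F atTop ∧
      TendstoUniformly (fun k => H k) F atTop := by
  obtain ⟨hγ0, hγ1⟩ := hγ
  obtain ⟨M, hMn⟩ := hFsupp.exists_bound_of_continuous hF
  have hM' : ∀ q, F q ≤ M := fun q => (le_abs_self _).trans (by simpa using hMn q)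
  have hK2 : IsCompact (Prod.snd '' tsupport F) := hFsupp.image continuous_snd
  obtain ⟨R, hR⟩ := hK2.isBounded.subset_closedBall 0
  have hR' : ∀ q ∈ tsupport F, |q.2| ≤ R := fun q hq => by
    have := hR (Set.mem_image_of_mem _ hq)
    simpa [Real.dist_eq] using this
  have hHnonneg : ∀ k (p : X × ℝ), 0 ≤ HH γ F k p := fun k p =>
    le_HH γ k p fun q => add_nonneg (hFpos q)
      (mul_nonneg (Nat.cast_nonneg k) (pen_nonneg γ k p q))
  refine ⟨GG γ F, HH γ F, ?_, ?_, ?_, ?_, ?_⟩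
  · -- per-k properties
    intro k hk
    have hk1 : (1:ℝ) ≤ (k:ℝ) := by exact_mod_cast hk
    refine ⟨?_, ?_, ?_, ?_, ?_, ?_, ?_, ?_⟩
    · exact fun p => (hFpos p).trans (F_le_GG γ hγ0 hM' k p)
    · exact fun p => hHnonneg k p
    · -- compact support of G k
      apply HasCompactSupport.intro
        (K := Set.univ ×ˢ Set.Icc (-(R+1+M)) (R+1+M))
        (isCompact_univ.prod isCompact_Icc)
      intro p hp
      have hp2 : R + 1 + M < |p.2| := by
        by_contra h
        push_neg at h
        exact hp ⟨Set.mem_univ _, abs_le.1 h⟩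
      apply le_antisymm
      · apply GG_le
        intro q
        by_cases hq : F q = 0
        · have h1 := mul_nonneg (Nat.cast_nonneg (α := ℝ) k) (pen_nonneg γ k p q)
          linarith
        · have hqs : q ∈ tsupport F := subset_tsupport F hq
          have h1 : |q.2| ≤ R := hR' q hqs
          have h3 : M ≤ |p.2 - q.2| - 1 := by
            have := abs_sub_abs_le_abs_sub p.2 q.2
            linarith
          have hM0 : 0 ≤ M := (hFpos q).trans (hM' q)
          have h4 : M ≤ pen γ k p q := by
            have h5 : 1/(k:ℝ) ≤ 1 := by
              rw [div_le_one (by linarith)]; linarith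
            have h6 := le_max_left (|p.2 - q.2| - 1/(k:ℝ)) 0
            have h7 := Real.rpow_nonneg (dist_nonneg (x := p.1) (y := q.1)) γ
            simp only [pen]
            linarith
          have h8 : M ≤ (k:ℝ) * pen γ k p q := by
            nlinarith [pen_nonneg γ k p q]
          have := hM' q
          linarith
      · exact (hFpos p).trans (F_le_GG γ hγ0 hM' k p)
    · -- compact support of H k
      apply HasCompactSupport.intro hFsupp
      intro p hp
      have h0 : F p = 0 := image_eq_zero_of_notMem_tsupport hp
      have h1 := HH_le_F γ hγ0 hFpos k p
      have h2 := hHnonneg k p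
      linarith
    · -- Hölder bound for G
      refine ⟨k, fun p q => abs_sub_le_iff.2 ⟨?_, ?_⟩⟩
      · have := GG_lip_half γ hγ0 hγ1.le hM' k p q
        linarith
      · have := GG_lip_half γ hγ0 hγ1.le hM' k q p
        rw [dist_comm q.1 p.1, abs_sub_comm q.2 p.2] at this
        linarith
    · -- Hölder bound for H
      refine ⟨k, fun p q => abs_sub_le_iff.2 ⟨?_, ?_⟩⟩
      · have := HH_lip_half γ hγ0 hγ1.le hFpos k q p
        rw [dist_comm q.1 p.1, abs_sub_comm q.2 p.2] at this
        linarith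
      · have := HH_lip_half γ hγ0 hγ1.le hFpos k p q
        linarith
    · -- H k ≤_{1/k} F
      intro x t v hv
      have h := HH_le γ hFpos k (x, t) (x, t + v)
      have hpen : pen γ k (x, t) (x, t + v) = 0 := by
        simp only [pen]
        rw [dist_self, Real.zero_rpow (ne_of_gt hγ0)]
        have h1 : t - (t + v) = -v := by ring
        rw [h1, abs_neg]
        have h2 : |v| - 1/(k:ℝ) ≤ 0 := by linarith
        rw [max_eq_right h2]; simp
      rwa [hpen, mul_zero, add_zero] at h
    · -- F ≤_{1/k} G k
      intro x t w hw
      have h := le_GG γ hM' k (x, t + w) (x, t)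
      have hpen : pen γ k (x, t + w) (x, t) = 0 := by
        simp only [pen]
        rw [dist_self, Real.zero_rpow (ne_of_gt hγ0)]
        have h1 : t + w - t = w := by ring
        rw [h1]
        have h2 : |w| - 1/(k:ℝ) ≤ 0 := by linarith
        rw [max_eq_right h2]; simp
      rwa [hpen, mul_zero, sub_zero] at h
  · -- G decreasing
    intro k hk p
    apply GG_le
    intro q
    have h1 := pen_mono (γ := γ) hk (Nat.le_succ k) p q
    have h2 := le_GG γ hM' k p q
    push_cast at h1 ⊢
    linarith
  · -- H increasing
    intro k hk p
    apply le_HH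
    intro q
    have h1 := pen_mono (γ := γ) hk (Nat.le_succ k) p q
    have h2 := HH_le γ hFpos k p q
    push_cast at h1 ⊢
    linarith
  · -- uniform convergence of G
    have hUC : UniformContinuous F := hFsupp.uniformContinuous_of_continuous hF
    rw [Metric.tendstoUniformly_iff]
    intro ε hε
    obtain ⟨δ, hδ0, hδ⟩ := Metric.uniformContinuous_iff.1 hUC (ε/2) (by linarith)
    set η := min (δ ^ γ) (δ/2) with hηdef
    have hη0 : 0 < η := lt_min (Real.rpow_pos_of_pos hδ0 γ) (by linarith)
    filter_upwards [eventually_ge_atTop 1,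
      tendsto_natCast_atTop_atTop.eventually_ge_atTop (2/δ),
      tendsto_natCast_atTop_atTop.eventually_ge_atTop ((M+1)/η)] with k hk1 hk2 hk3
    intro p
    have hkpos : (0:ℝ) < k := by exact_mod_cast hk1
    have hub : GG γ F k p ≤ F p + ε/2 := by
      apply GG_le
      intro q
      by_cases hc : pen γ k p q < η
      · have hd1 : dist q.1 p.1 < δ := by
          rw [dist_comm]
          by_contra h
          push_neg at h
          have h1 : δ ^ γ ≤ dist p.1 q.1 ^ γ := Real.rpow_le_rpow hδ0.le h hγ0.le
          have h2 : dist p.1 q.1 ^ γ ≤ pen γ k p q := by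
            have := le_max_right (|p.2 - q.2| - 1/(k:ℝ)) 0
            simp only [pen]; linarith
          have h3 : η ≤ δ ^ γ := min_le_left _ _
          linarith
        have hd2 : dist q.2 p.2 < δ := by
          have h1 : max (|p.2 - q.2| - 1/(k:ℝ)) 0 ≤ pen γ k p q := by
            have := Real.rpow_nonneg (dist_nonneg (x := p.1) (y := q.1)) γ
            simp only [pen]; linarith
          have h2 : η ≤ δ/2 := min_le_right _ _
          have h3 : |p.2 - q.2| - 1/(k:ℝ) < δ/2 :=
            lt_of_le_of_lt (le_trans (le_max_left _ _) h1) (lt_of_lt_of_le hc h2)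
          have h4 : 1/(k:ℝ) ≤ δ/2 := by
            rw [div_le_div_iff₀ hkpos two_pos]
            have := (div_le_iff₀ hδ0).1 hk2
            nlinarith
          rw [Real.dist_eq, abs_sub_comm]
          linarith
        have hqp : dist q p < δ := by
          rw [Prod.dist_eq]
          exact max_lt hd1 hd2
        have h5 : dist (F q) (F p) < ε/2 := hδ hqp
        rw [Real.dist_eq] at h5
        have h6 : F q - F p < ε/2 := lt_of_le_of_lt (le_abs_self _) h5
        have h7 := mul_nonneg (Nat.cast_nonneg (α := ℝ) k) (pen_nonneg γ k p q)
        linarith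
      · push_neg at hc
        have h1 : M + 1 ≤ (k:ℝ) * pen γ k p q := by
          have h2 : (M+1)/η * η ≤ (k:ℝ) * η :=
            mul_le_mul_of_nonneg_right hk3 hη0.le
          rw [div_mul_cancel₀ _ (ne_of_gt hη0)] at h2
          have h3 : (k:ℝ) * η ≤ (k:ℝ) * pen γ k p q :=
            mul_le_mul_of_nonneg_left hc (by positivity)
          linarith
        have := hM' q
        have := hFpos p
        linarith
    have hlb := F_le_GG γ hγ0 hM' k p
    rw [Real.dist_eq, abs_sub_comm, abs_of_nonneg (sub_nonneg.2 hlb)]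
    linarith
  · -- uniform convergence of H
    have hUC : UniformContinuous F := hFsupp.uniformContinuous_of_continuous hF
    rw [Metric.tendstoUniformly_iff]
    intro ε hε
    obtain ⟨δ, hδ0, hδ⟩ := Metric.uniformContinuous_iff.1 hUC (ε/2) (by linarith)
    set η := min (δ ^ γ) (δ/2) with hηdef
    have hη0 : 0 < η := lt_min (Real.rpow_pos_of_pos hδ0 γ) (by linarith)
    filter_upwards [eventually_ge_atTop 1,
      tendsto_natCast_atTop_atTop.eventually_ge_atTop (2/δ),
      tendsto_natCast_atTop_atTop.eventually_ge_atTop ((M+1)/η)] with k hk1 hk2 hk3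
    intro p
    have hkpos : (0:ℝ) < k := by exact_mod_cast hk1
    have hlb : F p - ε/2 ≤ HH γ F k p := by
      apply le_HH
      intro q
      by_cases hc : pen γ k p q < η
      · have hd1 : dist q.1 p.1 < δ := by
          rw [dist_comm]
          by_contra h
          push_neg at h
          have h1 : δ ^ γ ≤ dist p.1 q.1 ^ γ := Real.rpow_le_rpow hδ0.le h hγ0.le
          have h2 : dist p.1 q.1 ^ γ ≤ pen γ k p q := by
            have := le_max_right (|p.2 - q.2| - 1/(k:ℝ)) 0
            simp only [pen]; linarith
          have h3 : η ≤ δ ^ γ := min_le_left _ _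
          linarith
        have hd2 : dist q.2 p.2 < δ := by
          have h1 : max (|p.2 - q.2| - 1/(k:ℝ)) 0 ≤ pen γ k p q := by
            have := Real.rpow_nonneg (dist_nonneg (x := p.1) (y := q.1)) γ
            simp only [pen]; linarith
          have h2 : η ≤ δ/2 := min_le_right _ _
          have h3 : |p.2 - q.2| - 1/(k:ℝ) < δ/2 :=
            lt_of_le_of_lt (le_trans (le_max_left _ _) h1) (lt_of_lt_of_le hc h2)
          have h4 : 1/(k:ℝ) ≤ δ/2 := by
            rw [div_le_div_iff₀ hkpos two_pos]
            have := (div_le_iff₀ hδ0).1 hk2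
            nlinarith
          rw [Real.dist_eq, abs_sub_comm]
          linarith
        have hqp : dist q p < δ := by
          rw [Prod.dist_eq]
          exact max_lt hd1 hd2
        have h5 : dist (F q) (F p) < ε/2 := hδ hqp
        rw [Real.dist_eq] at h5
        have h6 : F p - F q < ε/2 := by
          have := abs_sub_abs_le_abs_sub (F q) (F p)
          have := neg_abs_le (F q - F p)
          linarith [abs_sub_comm (F q) (F p) ▸ h5, (abs_lt.1 h5).1]
        have h7 := mul_nonneg (Nat.cast_nonneg (α := ℝ) k) (pen_nonneg γ k p q)
        linarith
      · push_neg at hc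
        have h1 : M + 1 ≤ (k:ℝ) * pen γ k p q := by
          have h2 : (M+1)/η * η ≤ (k:ℝ) * η :=
            mul_le_mul_of_nonneg_right hk3 hη0.le
          rw [div_mul_cancel₀ _ (ne_of_gt hη0)] at h2
          have h3 : (k:ℝ) * η ≤ (k:ℝ) * pen γ k p q :=
            mul_le_mul_of_nonneg_left hc (by positivity)
          linarith
        have := hM' p
        have := hFpos q
        linarith
    have hub := HH_le_F γ hγ0 hFpos k p
    rw [Real.dist_eq, abs_of_nonneg (sub_nonneg.2 hub)]
    linarith
end
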